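/- Let F be an algebraically closed field of prime characteristic p, V a finite-dimensional F-vector space, and u an F-linear endomorphism of V. Let r = ord(u) and f_u(t) = ∏_{λ ∈ Λ(u)} (t − λ). Then there exists a minimal natural number k such that u^{p^k} is semisimple, and for this k the polynomial f_u(t)^{p^k} is the minimal p-polynomial of u: f_u(u)^{p^k} = 0 (i.e., evaluating f_u^{p^k} at u gives 0), and every nonzero p-polynomial g with g(u) = 0 has degree at least p^{r+k}. -/

import Mathlib

attribute [local instance] ZMod.algebra

/-- `Λ(u)`: the `𝔽_p`-subspace of `F` spanned by the eigenvalues of `u`. -/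
noncomputable def pLambda (p : ℕ) {F : Type} [Field F] [CharP F p]
    {V : Type} [AddCommGroup V] [Module F V] (u : Module.End F V) :
    Submodule (ZMod p) F :=
  Submodule.span (ZMod p) {μ : F | Module.End.HasEigenvalue u μ}

/-- The `p`-order of `u`: the dimension of `Λ(u)` over the prime field `𝔽_p`. -/
noncomputable def pOrd (p : ℕ) {F : Type} [Field F] [CharP F p]
    {V : Type} [AddCommGroup V] [Module F V] (u : Module.End F V) : ℕ :=
  Module.finrank (ZMod p) (pLambda p u)

/-- A `p`-polynomial: a polynomial of the form `a_0 t + a_1 t^p + ⋯ + a_k t^(p^k)`. -/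
def IsPPoly (p : ℕ) {F : Type} [Field F] (f : Polynomial F) : Prop :=
  ∃ (k : ℕ) (a : ℕ → F),
    f = ∑ j ∈ Finset.range (k + 1), Polynomial.C (a j) * Polynomial.X ^ p ^ j

open Polynomial

private lemma aeval_commute_aux {F A : Type*} [CommSemiring F] [Semiring A] [Algebra F A]
    (x : A) (P Q : Polynomial F) : Commute (Polynomial.aeval x P) (Polynomial.aeval x Q) := by
  show aeval x P * aeval x Q = aeval x Q * aeval x P
  rw [← map_mul, ← map_mul, mul_comm]

/-- For an endomorphism `u` with `p`-order `r` and
`f_u(t) = ∏_{λ ∈ Λ(u)} (t − λ)`, there is a minimal `k` with `u^(p^k)` semisimple, and then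
`f_u^(p^k)` is the minimal `p`-polynomial of `u`: it annihilates `u` and every nonzero
`p`-polynomial annihilating `u` has degree at least `p^(r+k)`. -/
theorem exists_minimal_semisimple_power_and_minimal_pPolynomial
    (p : ℕ) (hp : p.Prime) (F : Type) [Field F] [IsAlgClosed F] [CharP F p]
    (V : Type) [AddCommGroup V] [Module F V] [FiniteDimensional F V]
    (u : Module.End F V)
    (S : Finset F) (hS : (S : Set F) = (pLambda p u : Set F))
    (f : Polynomial F) (hf : f = ∏ c ∈ S, (Polynomial.X - Polynomial.C c)) :
    ∃ k : ℕ, (u ^ p ^ k).IsSemisimple ∧ (∀ j < k, ¬ (u ^ p ^ j).IsSemisimple) ∧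
      Polynomial.aeval u (f ^ p ^ k) = 0 ∧
      ∀ g : Polynomial F, IsPPoly p g → g ≠ 0 → Polynomial.aeval u g = 0 →
        p ^ (pOrd p u + k) ≤ g.natDegree := by
  classical
  haveI : Fact p.Prime := ⟨hp⟩
  haveI : CharP (Polynomial F) p := charP_of_injective_algebraMap
    (Polynomial.C_injective (R := F)) p
  -- Jordan-Chevalley decomposition
  obtain ⟨n, hnmem, s, hsmem, hnil, hss, hu⟩ :=
    Module.End.exists_isNilpotent_isSemisimple (f := u)
  rw [Algebra.adjoin_singleton_eq_range_aeval] at hnmem hsmem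
  obtain ⟨Q, hQ⟩ := hnmem
  obtain ⟨P, hP⟩ := hsmem
  replace hQ : Polynomial.aeval u Q = n := hQ
  replace hP : Polynomial.aeval u P = s := hP
  -- the minimal k with n^(p^k) = 0
  have hkex : ∃ k, n ^ p ^ k = 0 := by
    obtain ⟨m, hm⟩ := hnil
    refine ⟨m, ?_⟩
    have h1 : m ≤ p ^ m := (Nat.lt_pow_self (n := m) hp.one_lt).le
    calc n ^ p ^ m = n ^ m * n ^ (p ^ m - m) := by rw [← pow_add, Nat.add_sub_cancel' h1]
      _ = 0 := by rw [hm, zero_mul]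
  set k := Nat.find hkex with hkdef
  have hks : n ^ p ^ k = 0 := Nat.find_spec hkex
  have hkmin : ∀ j < k, n ^ p ^ j ≠ 0 := fun j hj => Nat.find_min hkex hj
  -- power additivity
  have hpow : ∀ j : ℕ, u ^ p ^ j = s ^ p ^ j + n ^ p ^ j := by
    intro j
    have hX : (X : Polynomial F) = (P + Q) + (X - (P + Q)) := by ring
    have hD : Polynomial.aeval u (X - (P + Q)) = 0 := by
      rw [map_sub, map_add, aeval_X, hP, hQ, hu]
      abel
    have hXeq : (X : Polynomial F) ^ p ^ j
        = P ^ p ^ j + Q ^ p ^ j + (X - (P + Q)) ^ p ^ j := by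
      conv_lhs => rw [hX]
      rw [add_pow_char_pow, add_pow_char_pow]
    have h5 := congrArg (Polynomial.aeval u) hXeq
    rw [map_pow, aeval_X, map_add, map_add, map_pow, map_pow, map_pow, hP, hQ, hD,
      zero_pow (pow_ne_zero j hp.ne_zero), add_zero] at h5
    exact h5
  -- semisimplicity of u^(p^k)
  have hsem : (u ^ p ^ k).IsSemisimple := by
    rw [hpow k, hks, add_zero]
    exact hss.pow _
  -- minimality
  have hmin : ∀ j < k, ¬ (u ^ p ^ j).IsSemisimple := by
    intro j hj hcon
    apply hkmin j hj
    have hnj : n ^ p ^ j = u ^ p ^ j - s ^ p ^ j := by rw [hpow j]; abel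
    have hcomm : Commute (u ^ p ^ j) (s ^ p ^ j) := by
      have h := aeval_commute_aux u X P
      rw [aeval_X, hP] at h
      exact h.pow_pow _ _
    have hsemi : (u ^ p ^ j - s ^ p ^ j).IsSemisimple :=
      Module.End.IsSemisimple.sub_of_commute hcomm hcon (hss.pow _)
    have hnilp : IsNilpotent (n ^ p ^ j) := by
      refine ⟨p ^ (k - j), ?_⟩
      rw [← pow_mul, ← pow_add, Nat.add_sub_cancel' hj.le, hks]
    rw [hnj] at hnilp ⊢
    exact Module.End.eq_zero_of_isNilpotent_isSemisimple hnilp hsemi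
  -- eigenvalues of s are eigenvalues of u
  have hcsn : Commute s n := by
    have h := aeval_commute_aux u P Q; rwa [hP, hQ] at h
  have hegv_s_u : ∀ μ : F, Module.End.HasEigenvalue s μ → Module.End.HasEigenvalue u μ := by
    intro μ hμ
    obtain ⟨w, hw⟩ := hμ.exists_hasEigenvector
    have hw0 : w ≠ 0 := hw.2
    have hsw : ∀ i : ℕ, s ((n ^ i) w) = μ • ((n ^ i) w) := by
      intro i
      induction i with
      | zero => simpa using Module.End.mem_eigenspace_iff.mp hw.1
      | succ i ih =>
        have h1 : (n ^ (i + 1)) w = n ((n ^ i) w) := by rw [pow_succ']; rfl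
        rw [h1]
        calc s (n ((n ^ i) w)) = (s * n) ((n ^ i) w) := rfl
          _ = (n * s) ((n ^ i) w) := by rw [hcsn]
          _ = n (s ((n ^ i) w)) := rfl
          _ = μ • (n ((n ^ i) w)) := by rw [ih, map_smul]
    obtain ⟨m, hm⟩ := hnil
    have hex : ∃ ℓ, (n ^ ℓ) w = 0 := ⟨m, by rw [hm]; rfl⟩
    have hℓpos : Nat.find hex ≠ 0 := by
      intro h
      have hsp := Nat.find_spec hex
      rw [h, pow_zero] at hsp
      exact hw0 hsp
    have hv0 : (n ^ (Nat.find hex - 1)) w ≠ 0 := Nat.find_min hex (Nat.pred_lt hℓpos)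
    have hnv : n ((n ^ (Nat.find hex - 1)) w) = 0 := by
      have h1 : n ((n ^ (Nat.find hex - 1)) w) = (n ^ (Nat.find hex - 1 + 1)) w := by
        rw [pow_succ']; rfl
      rw [h1, Nat.sub_add_cancel (Nat.one_le_iff_ne_zero.mpr hℓpos)]
      exact Nat.find_spec hex
    apply Module.End.hasEigenvalue_of_hasEigenvector (x := (n ^ (Nat.find hex - 1)) w)
    refine ⟨Module.End.mem_eigenspace_iff.mpr ?_, hv0⟩
    have h2 : u ((n ^ (Nat.find hex - 1)) w)
        = n ((n ^ (Nat.find hex - 1)) w) + s ((n ^ (Nat.find hex - 1)) w) := by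
      rw [hu]; rfl
    rw [h2, hnv, zero_add, hsw]
  have hegv_mem : ∀ μ : F, Module.End.HasEigenvalue u μ → μ ∈ S := by
    intro μ hμ
    have h1 : μ ∈ (pLambda p u : Set F) := Submodule.subset_span hμ
    rw [← hS] at h1
    exact h1
  -- f annihilates s
  have hfs : Polynomial.aeval s f = 0 := by
    have hint : IsIntegral F s := Algebra.IsIntegral.isIntegral s
    have hmon : (minpoly F s).Monic := minpoly.monic hint
    have hsplit : Splits (minpoly F s) := IsAlgClosed.splits _
    have hsep : (minpoly F s).Separable :=
      PerfectField.separable_iff_squarefree.mpr hss.minpoly_squarefree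
    have hnd : (minpoly F s).roots.Nodup := Polynomial.nodup_roots hsep
    have heq : minpoly F s = ((minpoly F s).roots.map fun a => X - C a).prod :=
      hsplit.eq_prod_roots_of_monic hmon
    have hsub : (minpoly F s).roots.toFinset ⊆ S := by
      intro c hc
      rw [Multiset.mem_toFinset] at hc
      have h1 : Module.End.HasEigenvalue s c :=
        (Module.End.hasEigenvalue_iff_isRoot).mpr (isRoot_of_mem_roots hc)
      exact hegv_mem c (hegv_s_u c h1)
    have hdvd : minpoly F s ∣ f := by
      have h2 : ∏ c ∈ (minpoly F s).roots.toFinset, (X - C c)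
          = ((minpoly F s).roots.map fun a => X - C a).prod := by
        rw [Finset.prod_eq_multiset_prod, Multiset.toFinset_val,
          Multiset.dedup_eq_self.mpr hnd]
      rw [hf, heq, ← h2]
      exact Finset.prod_dvd_prod_of_subset _ _ _ hsub
    obtain ⟨c, hc⟩ := hdvd
    rw [hc, map_mul, minpoly.aeval, zero_mul]
  -- f(u)^(p^k) = 0
  have hus : u - s = n := by rw [hu]; abel
  have hfu : Polynomial.aeval u (f ^ p ^ k) = 0 := by
    have h1 : (X : Polynomial F) - P ∣ f - f.comp P := by
      have h := Polynomial.sub_dvd_eval_sub (X : Polynomial F) P (f.map C)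
      rw [eval_map, eval_map, eval₂_C_X] at h
      rw [comp_eq_aeval, aeval_def, Polynomial.algebraMap_eq]
      exact h
    obtain ⟨c, hc⟩ := h1
    have h2 : Polynomial.aeval u f = n * Polynomial.aeval u c := by
      have h3 := congrArg (Polynomial.aeval u) hc
      rw [map_sub, map_mul, map_sub, aeval_X, aeval_comp, hP, hfs, sub_zero, hus] at h3
      exact h3
    have hcm : Commute n (Polynomial.aeval u c) := by
      have h := aeval_commute_aux u Q c; rwa [hQ] at h
    rw [map_pow, h2, hcm.mul_pow, hks, zero_mul]
  -- the degree bound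
  refine ⟨k, hsem, hmin, hfu, ?_⟩
  intro g hgp hg0 hgu
  obtain ⟨m, a, hga⟩ := hgp
  have heval : ∀ x : F, g.eval x = ∑ j ∈ Finset.range (m + 1), a j * x ^ p ^ j := by
    intro x
    rw [hga, eval_finset_sum]
    simp
  -- kernel of g on F contains Λ(u)
  have hker : ∀ c ∈ S, g.eval c = 0 := by
    have hmind : minpoly F u ∣ g := minpoly.dvd F u hgu
    have hroot : ∀ μ : F, Module.End.HasEigenvalue u μ → g.eval μ = 0 := fun μ hμ =>
      (Module.End.hasEigenvalue_iff_isRoot.mp hμ).dvd hmind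
    let φ : F →+ F :=
      { toFun := fun x => g.eval x
        map_zero' := by
          show g.eval 0 = 0
          rw [heval]
          refine Finset.sum_eq_zero fun j _ => ?_
          rw [zero_pow (pow_ne_zero j hp.ne_zero), mul_zero]
        map_add' := by
          intro x y
          show g.eval (x + y) = g.eval x + g.eval y
          simp only [heval]
          rw [← Finset.sum_add_distrib]
          refine Finset.sum_congr rfl fun j _ => ?_
          rw [add_pow_char_pow, mul_add] }
    have hsub : pLambda p u ≤ (AddSubgroup.toZModSubmodule p φ.ker : Submodule (ZMod p) F) := by
      rw [pLambda, Submodule.span_le]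
      intro μ hμ
      simp only [SetLike.mem_coe, AddSubgroup.mem_toZModSubmodule, AddMonoidHom.mem_ker]
      exact hroot μ hμ
    intro c hc
    have hcΛ : c ∈ pLambda p u := by
      have h1 : c ∈ (S : Set F) := hc
      rw [hS] at h1
      exact h1
    have h2 := hsub hcΛ
    rw [AddSubgroup.mem_toZModSubmodule, AddMonoidHom.mem_ker] at h2
    exact h2
  -- g annihilates n
  have hgn : Polynomial.aeval n g = 0 := by
    have hadd : Polynomial.aeval u g = Polynomial.aeval s g + Polynomial.aeval n g := by
      rw [hga, map_sum, map_sum, map_sum, ← Finset.sum_add_distrib]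
      refine Finset.sum_congr rfl fun j _ => ?_
      rw [map_mul, map_mul, map_mul, aeval_C, aeval_C, aeval_C, map_pow, map_pow, map_pow,
        aeval_X, aeval_X, aeval_X, hpow j, mul_add]
    have hnil_g : IsNilpotent (Polynomial.aeval n g) := by
      have hx : (X : Polynomial F) ∣ g := by
        rw [hga]
        exact Finset.dvd_sum fun j _ =>
          dvd_mul_of_dvd_right (dvd_pow_self X (pow_ne_zero j hp.ne_zero)) _
      obtain ⟨w', hw'⟩ := hx
      rw [hw', map_mul, aeval_X]
      have hcm : Commute n (Polynomial.aeval n w') := by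
        have h := aeval_commute_aux n X w'; rwa [aeval_X] at h
      exact hcm.isNilpotent_mul_right hnil
    have hsg : Polynomial.aeval s g = -Polynomial.aeval n g :=
      eq_neg_of_add_eq_zero_left (by rw [← hadd, hgu])
    have hsg0 : Polynomial.aeval s g = 0 := by
      apply Module.End.eq_zero_of_isNilpotent_isSemisimple _ (hss.aeval g)
      rw [hsg]
      exact hnil_g.neg
    rw [hadd, hsg0, zero_add] at hgu
    exact hgu
  -- minpoly of n is a power of X
  have hminn : ∃ i : ℕ, minpoly F n = X ^ i ∧ n ^ i = 0 := by
    obtain ⟨m₀, hm₀⟩ := hnil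
    have hdvd : minpoly F n ∣ X ^ m₀ := minpoly.dvd F n (by rw [map_pow, aeval_X, hm₀])
    obtain ⟨i, _, hass⟩ := (dvd_prime_pow Polynomial.prime_X m₀).mp hdvd
    have heqi : minpoly F n = X ^ i :=
      Polynomial.eq_of_monic_of_associated
        (minpoly.monic (Algebra.IsIntegral.isIntegral n)) (monic_X_pow i) hass
    refine ⟨i, heqi, ?_⟩
    have h := minpoly.aeval F n
    rw [heqi, map_pow, aeval_X] at h
    exact h
  obtain ⟨i, hiX, hni⟩ := hminn
  have hig : (X : Polynomial F) ^ i ∣ g := by rw [← hiX]; exact minpoly.dvd F n hgn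
  -- coefficients of g
  have hcoeff : ∀ j ∈ Finset.range (m + 1), g.coeff (p ^ j) = a j := by
    intro j hj
    rw [hga, finset_sum_coeff, Finset.sum_eq_single j]
    · rw [coeff_C_mul, coeff_X_pow, if_pos rfl, mul_one]
    · intro b _ hbj
      rw [coeff_C_mul, coeff_X_pow,
        if_neg (fun h => hbj (Nat.pow_right_injective hp.two_le h.symm)), mul_zero]
    · intro h
      exact absurd hj h
  -- X^(p^k) divides g
  have hXk : (X : Polynomial F) ^ p ^ k ∣ g := by
    rw [hga]
    refine Finset.dvd_sum fun j hj => ?_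
    by_cases hjk : j < k
    · have hpj : p ^ j < i := by
        by_contra hcon
        push_neg at hcon
        apply hkmin j hjk
        calc n ^ p ^ j = n ^ i * n ^ (p ^ j - i) := by rw [← pow_add, Nat.add_sub_cancel' hcon]
          _ = 0 := by rw [hni, zero_mul]
      have haj : a j = 0 := by
        rw [← hcoeff j hj]
        exact X_pow_dvd_iff.mp hig _ hpj
      rw [haj, map_zero, zero_mul]
      exact dvd_zero _
    · push_neg at hjk
      exact dvd_mul_of_dvd_right (pow_dvd_pow X (Nat.pow_le_pow_right hp.pos hjk)) _
  -- each (X - c)^(p^k) divides g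
  have hfac : ∀ c ∈ S, ((X : Polynomial F) - C c) ^ p ^ k ∣ g := by
    intro c hcS
    have h1 : g.comp (X + C c) = g + C (g.eval c) := by
      rw [comp_eq_aeval]
      conv_lhs => rw [hga]
      rw [map_sum]
      have h2 : ∀ j ∈ Finset.range (m + 1),
          Polynomial.aeval (X + C c) (C (a j) * X ^ p ^ j)
            = C (a j) * X ^ p ^ j + C (a j * c ^ p ^ j) := by
        intro j _
        simp only [map_mul, aeval_C, map_pow, aeval_X, Polynomial.algebraMap_eq]
        rw [add_pow_char_pow, mul_add, ← C_pow, ← C_mul]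
      rw [Finset.sum_congr rfl h2, Finset.sum_add_distrib, ← hga, ← map_sum, ← heval]
    have hcomp : g.comp (X + C c) = g := by rw [h1, hker c hcS, map_zero, add_zero]
    obtain ⟨q, hq⟩ := hXk
    have h3 : (g.comp (X + C c)).comp (X - C c) = g := by
      rw [comp_assoc, add_comp, X_comp, C_comp, sub_add_cancel, comp_X]
    have h4 : g = ((X : Polynomial F) ^ p ^ k * q).comp (X - C c) := by
      calc g = (g.comp (X + C c)).comp (X - C c) := h3.symm
        _ = ((X : Polynomial F) ^ p ^ k * q).comp (X - C c) := by rw [hcomp, hq]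
    exact ⟨q.comp (X - C c), by rw [h4, mul_comp, pow_comp, X_comp]⟩
  -- product divides g
  have hprod : f ^ p ^ k ∣ g := by
    rw [hf, ← Finset.prod_pow]
    refine Finset.prod_dvd_of_coprime ?_ fun c hc => hfac c hc
    intro c _ d _ hcd
    exact (Polynomial.pairwise_coprime_X_sub_C Function.injective_id hcd).pow
  -- cardinality of S
  have hfin : (pLambda p u : Set F).Finite := by rw [← hS]; exact S.finite_toSet
  haveI : Fintype (pLambda p u) := hfin.fintype
  have hScard : S.card = p ^ pOrd p u := by
    have h1 : Fintype.card (pLambda p u)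
        = p ^ Module.finrank (ZMod p) (pLambda p u) := by
      have h := Module.card_eq_pow_finrank (K := ZMod p) (V := pLambda p u)
      rwa [ZMod.card] at h
    have h2 : S.card = Fintype.card (pLambda p u) := by
      rw [← Fintype.card_coe]
      exact Fintype.card_congr (Equiv.setCongr hS)
    rw [h2, h1, pOrd]
  -- conclude
  have hmonf : f.Monic := by
    rw [hf]
    exact monic_prod_of_monic _ _ fun c _ => monic_X_sub_C c
  have hdegf : f.natDegree = S.card := by
    rw [hf, natDegree_prod_of_monic _ _ fun c _ => monic_X_sub_C c]
    simp
  have hle := Polynomial.natDegree_le_of_dvd hprod hg0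
  rw [hmonf.natDegree_pow, hdegf, hScard] at hle
  calc p ^ (pOrd p u + k) = p ^ k * p ^ pOrd p u := by rw [pow_add, Nat.mul_comm]
    _ ≤ g.natDegree := hle
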